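/- Let F ⊆ ℝ be a closed set with lower dimension bounded below by s > 0. Then the Hausdorff dimension of the n-fold iterated sumset nF tends to 1 as n → ∞. -/

import Mathlib

open Set Metric Filter Pointwise

/-- Smallest number of balls of radius `r` needed to cover `E`. -/
noncomputable def coverNum {X : Type*} [PseudoMetricSpace X] (E : Set X) (r : ℝ) : ℕ :=
  sInf {n : ℕ | ∃ S : Finset X, S.card = n ∧ E ⊆ ⋃ x ∈ S, Metric.ball x r}

/-- Upper box dimension of a bounded set. -/
noncomputable def upperBoxDimBdd {X : Type*} [PseudoMetricSpace X] (E : Set X) : ℝ :=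
  Filter.limsup (fun r : ℝ => Real.log (coverNum E r : ℝ) / (-Real.log r))
    (nhdsWithin 0 (Set.Ioi 0))

/-- Lower box dimension of a bounded set. -/
noncomputable def lowerBoxDimBdd {X : Type*} [PseudoMetricSpace X] (E : Set X) : ℝ :=
  Filter.liminf (fun r : ℝ => Real.log (coverNum E r : ℝ) / (-Real.log r))
    (nhdsWithin 0 (Set.Ioi 0))

/-- Upper box dimension, extended to unbounded sets via suprema over bounded subsets. -/
noncomputable def upperBoxDim {X : Type*} [PseudoMetricSpace X] (E : Set X) : ℝ :=
  ⨆ K : {K : Set X // K ⊆ E ∧ Bornology.IsBounded K}, upperBoxDimBdd K.1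

/-- Lower box dimension, extended to unbounded sets via suprema over bounded subsets. -/
noncomputable def lowerBoxDim {X : Type*} [PseudoMetricSpace X] (E : Set X) : ℝ :=
  ⨆ K : {K : Set X // K ⊆ E ∧ Bornology.IsBounded K}, lowerBoxDimBdd K.1

/-- Assouad dimension. -/
noncomputable def assouadDim {X : Type*} [PseudoMetricSpace X] (F : Set X) : ℝ :=
  sInf {s : ℝ | 0 ≤ s ∧ ∃ C > 0, ∀ x ∈ F, ∀ R > 0, ∀ r, 0 < r → r < R →
    (coverNum (Metric.ball x R ∩ F) r : ℝ) ≤ C * (R / r) ^ s}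

/-- Lower dimension. -/
noncomputable def lowerDim {X : Type*} [PseudoMetricSpace X] (F : Set X) : ℝ :=
  sSup {s : ℝ | 0 ≤ s ∧ ∃ C > 0, ∀ x ∈ F, ∀ R, 0 < R → R < Metric.diam F →
    ∀ r, 0 < r → r < R →
      C * (R / r) ^ s ≤ (coverNum (Metric.ball x R ∩ F) r : ℝ)}

/-- `n`-fold iterated sumset: `iterSumset F n = F + F + ⋯ + F` (`n` times), with
`iterSumset F 0 = {0}`. -/
def iterSumset {M : Type*} [AddMonoid M] (F : Set M) : ℕ → Set M
  | 0 => {0}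
  | n + 1 => iterSumset F n + F

/-- Distance set of a set in a metric space. -/
def distSet {X : Type*} [PseudoMetricSpace X] (F : Set X) : Set ℝ :=
  {r : ℝ | ∃ x ∈ F, ∃ y ∈ F, dist x y = r}

open Topology ENNReal NNReal

lemma sum_mem_iterSumset {F : Set ℝ} : ∀ {m : ℕ} (a : Fin m → ℝ), (∀ i, a i ∈ F) →
    (∑ i, a i) ∈ iterSumset F m := by
  intro m
  induction m with
  | zero => intro a _; simp [iterSumset]
  | succ m ih =>
    intro a ha
    rw [Fin.sum_univ_castSucc]
    exact Set.add_mem_add (ih _ fun i => ha _) (ha _)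

lemma exists_prop_of_le_lowerDim {F : Set ℝ} {s : ℝ} (hs : 0 < s) (hL : s ≤ lowerDim F) :
    0 < Metric.diam F ∧ ∃ t C : ℝ, 0 < t ∧ 0 < C ∧ ∀ x ∈ F, ∀ R, 0 < R → R < Metric.diam F →
      ∀ r, 0 < r → r < R → C * (R / r) ^ t ≤ (coverNum (Metric.ball x R ∩ F) r : ℝ) := by
  set S := {u : ℝ | 0 ≤ u ∧ ∃ C > 0, ∀ x ∈ F, ∀ R, 0 < R → R < Metric.diam F →
    ∀ r, 0 < r → r < R →
      C * (R / r) ^ u ≤ (coverNum (Metric.ball x R ∩ F) r : ℝ)} with hS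
  have hbdd : BddAbove S := by
    by_contra h
    rw [lowerDim, ← hS, Real.sSup_of_not_bddAbove h] at hL
    linarith
  have hdiam : 0 < Metric.diam F := by
    rcases lt_or_ge 0 (Metric.diam F) with h | h
    · exact h
    · exfalso
      have : ∀ M : ℝ, max M 0 + 1 ∈ S := by
        intro M
        refine ⟨by positivity, 1, one_pos, fun x hx R hR hRd => absurd (hR.trans hRd) (by linarith)⟩
      obtain ⟨b, hb⟩ := hbdd
      have := hb (this b)
      have : max b 0 + 1 ≤ b := this
      have : b ≤ max b 0 := le_max_left _ _
      linarith
  refine ⟨hdiam, ?_⟩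
  have hne : S.Nonempty := by
    by_contra h
    rw [Set.not_nonempty_iff_eq_empty] at h
    rw [lowerDim, ← hS, h, Real.sSup_empty] at hL
    linarith
  obtain ⟨t, htS, hts⟩ := exists_lt_of_lt_csSup hne (show s/2 < sSup S by
    rw [lowerDim, ← hS] at hL; linarith)
  obtain ⟨ht0, C, hC0, hP⟩ := htS
  exact ⟨t, C, by linarith, hC0, hP⟩

lemma twoPoint {F : Set ℝ} {t C : ℝ} (ht : 0 < t) (hC : 0 < C)
    (hP : ∀ x ∈ F, ∀ R, 0 < R → R < Metric.diam F →
      ∀ r, 0 < r → r < R → C * (R / r) ^ t ≤ (coverNum (Metric.ball x R ∩ F) r : ℝ)) :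
    ∃ γ : ℝ, 0 < γ ∧ γ ≤ 2⁻¹ ∧ ∀ x ∈ F, ∀ R, 0 < R → R < Metric.diam F →
      ∃ p q, p ∈ F ∧ q ∈ F ∧ dist p x < R ∧ dist q x < R ∧ γ * R ≤ q - p := by
  refine ⟨min ((C/2) ^ (1/t)) 2⁻¹, lt_min (Real.rpow_pos_of_pos (by linarith) _) (by norm_num),
    min_le_right _ _, fun x hx R hR0 hRD => ?_⟩
  set γ := min ((C/2) ^ (1/t)) 2⁻¹ with hγdef
  have hγ0 : 0 < γ := lt_min (Real.rpow_pos_of_pos (by linarith) _) (by norm_num)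
  have hγ1 : γ < 1 := lt_of_le_of_lt (min_le_right _ _) (by norm_num)
  have hr0 : 0 < γ * R := mul_pos hγ0 hR0
  have hrR : γ * R < R := by nlinarith
  have hkey : (2 : ℝ) ≤ C * (R / (γ * R)) ^ t := by
    have h1 : R / (γ * R) = 1/γ := by
      rw [mul_comm]; field_simp
    have h2 : (2/C) ^ (1/t) ≤ 1/γ := by
      rw [one_div γ]
      have : γ ≤ (C/2) ^ (1/t) := min_le_left _ _
      calc (2/C) ^ (1/t) = ((C/2) ^ (1/t))⁻¹ := by
            rw [show (2/C : ℝ) = (C/2)⁻¹ by field_simp, Real.inv_rpow (by positivity)]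
        _ ≤ γ⁻¹ := inv_anti₀ hγ0 this
    have h3 : ((2/C) ^ (1/t)) ^ t ≤ (1/γ) ^ t :=
      Real.rpow_le_rpow (Real.rpow_nonneg (by positivity) _) h2 ht.le
    have h4 : ((2/C : ℝ) ^ (1/t)) ^ t = 2/C := by
      rw [← Real.rpow_mul (by positivity), one_div, inv_mul_cancel₀ ht.ne', Real.rpow_one]
    rw [h1]
    calc (2:ℝ) = C * (2/C) := by field_simp
      _ ≤ C * (1/γ) ^ t := by
          apply mul_le_mul_of_nonneg_left _ hC.le
          rw [← h4]; exact h3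
  have h2n : 2 ≤ coverNum (Metric.ball x R ∩ F) (γ * R) := by
    have := (hkey.trans (hP x hx R hR0 hRD (γ*R) hr0 hrR))
    exact_mod_cast this
  by_contra hcon
  push_neg at hcon
  have hsub : Metric.ball x R ∩ F ⊆ Metric.ball x (γ * R) := by
    intro y hy
    have hxE : x ∈ Metric.ball x R ∩ F := ⟨mem_ball_self hR0, hx⟩
    have h1 := hcon y x hy.2 hx (by simpa [Real.dist_eq] using hy.1) (by simp [hR0])
    have h2 := hcon x y hx hy.2 (by simp [hR0]) (by simpa [Real.dist_eq] using hy.1)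
    rw [mem_ball, Real.dist_eq, abs_lt]
    constructor <;> linarith
  have : coverNum (Metric.ball x R ∩ F) (γ * R) ≤ 1 := by
    apply Nat.sInf_le
    exact ⟨{x}, Finset.card_singleton x, by simpa using hsub⟩
  omega

noncomputable def vecAux (x0 : ℝ) (pt qt : ℝ → ℝ → ℝ) (Rf : ℕ → ℝ) (n : ℕ) :
    List (Fin (n+1)) → Fin n → ℝ
  | [] => fun _ => x0
  | j :: w => fun i => if (i : ℕ) < (j : ℕ) then qt (vecAux x0 pt qt Rf n w i) (Rf w.length)
      else pt (vecAux x0 pt qt Rf n w i) (Rf w.length)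

def wpre {n : ℕ} (ω : ℕ → Fin (n+1)) : ℕ → List (Fin (n+1))
  | 0 => []
  | k+1 => ω k :: wpre ω k

lemma wpre_length {n : ℕ} (ω : ℕ → Fin (n+1)) (k : ℕ) : (wpre ω k).length = k := by
  induction k with
  | zero => rfl
  | succ k ih => simp [wpre, ih]

lemma wpre_agree {n : ℕ} {ω ω' : ℕ → Fin (n+1)} : ∀ {k : ℕ}, (∀ l, l < k → ω l = ω' l) →
    wpre ω k = wpre ω' k := by
  intro k
  induction k with
  | zero => intro _; rfl
  | succ k ih =>
    intro h
    simp only [wpre]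
    rw [h k (by omega), ih fun l hl => h l (by omega)]


noncomputable def digitMap (n : ℕ) (ω : ℕ → Fin (n+1)) : ℝ :=
  ∑' l, (ω l : ℝ) * (((n:ℝ)+1)⁻¹) ^ (l+1)

lemma base_inv_lt_one {n : ℕ} (hn : 1 ≤ n) : ((n:ℝ)+1)⁻¹ < 1 := by
  have hn1 : (1:ℝ) ≤ (n:ℝ) := by exact_mod_cast hn
  rw [inv_lt_one_iff₀]; right; linarith

lemma digit_le {n : ℕ} (j : Fin (n+1)) : ((j : ℕ) : ℝ) ≤ (n : ℝ) := by
  have := j.isLt; exact_mod_cast Nat.lt_succ_iff.mp this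

lemma digit_term_le {n : ℕ} (ω : ℕ → Fin (n+1)) (l : ℕ) :
    (ω l : ℝ) * (((n:ℝ)+1)⁻¹) ^ (l+1) ≤ ((n:ℝ) * ((n:ℝ)+1)⁻¹) * (((n:ℝ)+1)⁻¹) ^ l := by
  have h2 : ((n:ℝ) * ((n:ℝ)+1)⁻¹) * (((n:ℝ)+1)⁻¹) ^ l = (n:ℝ) * (((n:ℝ)+1)⁻¹) ^ (l+1) := by
    rw [pow_succ]; ring
  rw [h2]
  have := digit_le (ω l)
  have hp : (0:ℝ) ≤ (((n:ℝ)+1)⁻¹) ^ (l+1) := by positivity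
  nlinarith
lemma digit_summable {n : ℕ} (hn : 1 ≤ n) (ω : ℕ → Fin (n+1)) :
    Summable (fun l => (ω l : ℝ) * (((n:ℝ)+1)⁻¹) ^ (l+1)) := by
  apply Summable.of_nonneg_of_le (fun l => by positivity) (digit_term_le ω)
  exact Summable.mul_left _
    (summable_geometric_of_lt_one (by positivity) (base_inv_lt_one hn))

lemma digit_tail_bound {n : ℕ} (hn : 1 ≤ n) (ω : ℕ → Fin (n+1)) (k : ℕ) :
    0 ≤ digitMap n ω - ∑ l ∈ Finset.range k, (ω l : ℝ) * (((n:ℝ)+1)⁻¹) ^ (l+1) ∧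
    digitMap n ω - ∑ l ∈ Finset.range k, (ω l : ℝ) * (((n:ℝ)+1)⁻¹) ^ (l+1)
      ≤ (((n:ℝ)+1)⁻¹) ^ k := by
  have hn1 : (1:ℝ) ≤ (n:ℝ) := by exact_mod_cast hn
  have hs := digit_summable hn ω
  have hsplit := Summable.sum_add_tsum_nat_add k hs
  have hdiff : digitMap n ω - ∑ l ∈ Finset.range k, (ω l : ℝ) * (((n:ℝ)+1)⁻¹) ^ (l+1)
      = ∑' l, (ω (l+k) : ℝ) * (((n:ℝ)+1)⁻¹) ^ (l+k+1) := by
    rw [digitMap, ← hsplit]; exact add_sub_cancel_left _ _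
  have hb1 : ((n:ℝ)+1)⁻¹ < 1 := base_inv_lt_one hn
  constructor
  · rw [hdiff]; exact tsum_nonneg fun l => by positivity
  · rw [hdiff]
    have hle : ∀ l, (ω (l+k) : ℝ) * (((n:ℝ)+1)⁻¹) ^ (l+k+1) ≤
        ((n:ℝ) * (((n:ℝ)+1)⁻¹) ^ (k+1)) * (((n:ℝ)+1)⁻¹) ^ l := by
      intro l
      have h2 : ((n:ℝ) * (((n:ℝ)+1)⁻¹) ^ (k+1)) * (((n:ℝ)+1)⁻¹) ^ l
          = (n:ℝ) * (((n:ℝ)+1)⁻¹) ^ (l+k+1) := by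
        rw [show l+k+1 = l+(k+1) by ring, pow_add]; ring
      rw [h2]
      have := digit_le (ω (l+k))
      have hp : (0:ℝ) ≤ (((n:ℝ)+1)⁻¹) ^ (l+k+1) := by positivity
      nlinarith
    have hgs : Summable (fun l : ℕ => ((n:ℝ) * (((n:ℝ)+1)⁻¹) ^ (k+1)) * (((n:ℝ)+1)⁻¹) ^ l) :=
      Summable.mul_left _ (summable_geometric_of_lt_one (by positivity) hb1)
    calc ∑' l, (ω (l+k) : ℝ) * (((n:ℝ)+1)⁻¹) ^ (l+k+1)
        ≤ ∑' l, ((n:ℝ) * (((n:ℝ)+1)⁻¹) ^ (k+1)) * (((n:ℝ)+1)⁻¹) ^ l := by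
          apply Summable.tsum_le_tsum hle _ hgs
          exact (hs.comp_injective (add_left_injective k)).congr (fun l => rfl)
      _ = ((n:ℝ) * (((n:ℝ)+1)⁻¹) ^ (k+1)) * (1 - ((n:ℝ)+1)⁻¹)⁻¹ := by
          rw [_root_.tsum_mul_left, tsum_geometric_of_lt_one (by positivity) hb1]
      _ = (((n:ℝ)+1)⁻¹) ^ k := by
          have hb0 : ((n:ℝ)+1) ≠ 0 := by positivity
          have hnn : (n:ℝ) ≠ 0 := by linarith
          have h1 : (1:ℝ) - ((n:ℝ)+1)⁻¹ = (n:ℝ) * ((n:ℝ)+1)⁻¹ := by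
            field_simp
            ring
          rw [h1, pow_succ, mul_inv]
          field_simp

noncomputable def digOf (n : ℕ) (r : ℝ) : Fin (n+1) :=
  ⟨min n (⌊r * ((n:ℝ)+1)⌋).toNat, by omega⟩

noncomputable def remMap (n : ℕ) (r : ℝ) : ℝ := r * ((n:ℝ)+1) - ((digOf n r : ℕ) : ℝ)

lemma remMap_step {n : ℕ} {r : ℝ} (hr : r ∈ Set.Icc (0:ℝ) 1) :
    remMap n r ∈ Set.Icc (0:ℝ) 1 ∧
      r = ((digOf n r : ℕ) : ℝ) * ((n:ℝ)+1)⁻¹ + remMap n r * ((n:ℝ)+1)⁻¹ := by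
  obtain ⟨hr0, hr1⟩ := hr
  have hb : (0:ℝ) < (n:ℝ)+1 := by positivity
  have hx0 : 0 ≤ r * ((n:ℝ)+1) := by positivity
  have hfl0 : 0 ≤ ⌊r * ((n:ℝ)+1)⌋ := Int.floor_nonneg.2 hx0
  have hcast : ((⌊r * ((n:ℝ)+1)⌋.toNat : ℕ) : ℝ) = ((⌊r * ((n:ℝ)+1)⌋ : ℤ) : ℝ) := by
    exact_mod_cast Int.toNat_of_nonneg hfl0
  have hdle : ((digOf n r : ℕ) : ℝ) ≤ r * ((n:ℝ)+1) := by
    have h1 : (digOf n r : ℕ) ≤ ⌊r * ((n:ℝ)+1)⌋.toNat := min_le_right _ _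
    calc ((digOf n r : ℕ) : ℝ) ≤ ((⌊r * ((n:ℝ)+1)⌋.toNat : ℕ) : ℝ) := by exact_mod_cast h1
      _ = ((⌊r * ((n:ℝ)+1)⌋ : ℤ) : ℝ) := hcast
      _ ≤ r * ((n:ℝ)+1) := Int.floor_le _
  have hrem1 : r * ((n:ℝ)+1) - ((digOf n r : ℕ) : ℝ) ≤ 1 := by
    rcases le_or_gt (⌊r * ((n:ℝ)+1)⌋.toNat) n with h | h
    · have hd : (digOf n r : ℕ) = ⌊r * ((n:ℝ)+1)⌋.toNat := min_eq_right h
      have := Int.lt_floor_add_one (r * ((n:ℝ)+1))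
      rw [hd, hcast]
      linarith
    · have hd : (digOf n r : ℕ) = n := min_eq_left (by omega)
      have : r * ((n:ℝ)+1) ≤ 1 * ((n:ℝ)+1) := by nlinarith
      rw [hd]
      linarith
  refine ⟨⟨by simp [remMap]; linarith, by simp [remMap]; linarith⟩, ?_⟩
  rw [remMap]
  field_simp
  ring
lemma digit_surj {n : ℕ} (hn : 1 ≤ n) {c : ℝ} (hc : c ∈ Set.Icc (0:ℝ) 1) :
    ∃ ω : ℕ → Fin (n+1), digitMap n ω = c := by
  have hn1 : (1:ℝ) ≤ (n:ℝ) := by exact_mod_cast hn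
  set b : ℝ := ((n:ℝ)+1)⁻¹ with hbdef
  have hb0 : 0 < b := by positivity
  have hb1 : b < 1 := base_inv_lt_one hn
  refine ⟨fun l => digOf n ((remMap n)^[l] c), ?_⟩
  set ω : ℕ → Fin (n+1) := fun l => digOf n ((remMap n)^[l] c) with hωdef
  have hinv : ∀ k : ℕ, (remMap n)^[k] c ∈ Set.Icc (0:ℝ) 1 ∧
      c = (∑ l ∈ Finset.range k, ((ω l : ℕ) : ℝ) * b ^ (l+1)) + ((remMap n)^[k] c) * b ^ k := by
    intro k
    induction k with
    | zero => exact ⟨hc, by simp⟩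
    | succ k ih =>
      obtain ⟨hmem, hid⟩ := ih
      set r : ℝ := (remMap n)^[k] c with hr
      obtain ⟨hmem', hid'⟩ := remMap_step (n := n) hmem
      rw [← hbdef] at hid'
      have hit : (remMap n)^[k+1] c = remMap n r := by
        rw [Function.iterate_succ_apply']
      have hωk : ((ω k : ℕ) : ℝ) = ((digOf n r : ℕ) : ℝ) := by
        simp only [hωdef]
        rfl
      refine ⟨by rw [hit]; exact hmem', ?_⟩
      rw [hit, Finset.sum_range_succ, hωk]
      linear_combination hid + b ^ k * hid'
  have htto : Tendsto (fun k => ∑ l ∈ Finset.range k, ((ω l : ℕ) : ℝ) * b ^ (l+1)) atTop (𝓝 c) := by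
    rw [tendsto_iff_dist_tendsto_zero]
    apply squeeze_zero (fun k => dist_nonneg) (g := fun k => b ^ k)
    · intro k
      obtain ⟨⟨h0, h1⟩, hid⟩ := hinv k
      rw [Real.dist_eq, abs_le]
      have hbk : (0:ℝ) ≤ b ^ k := by positivity
      constructor <;> nlinarith
    · exact tendsto_pow_atTop_nhds_zero_of_lt_one hb0.le hb1
  have htto2 := (digit_summable hn ω).hasSum.tendsto_sum_nat
  exact tendsto_nhds_unique htto2 htto

lemma digit_close {n : ℕ} (hn : 1 ≤ n) (ω ω' : ℕ → Fin (n+1)) (k : ℕ)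
    (hag : ∀ l, l < k → ω l = ω' l) :
    |digitMap n ω - digitMap n ω'| ≤ (((n:ℝ)+1)⁻¹) ^ k := by
  obtain ⟨h1, h2⟩ := digit_tail_bound hn ω k
  obtain ⟨h1', h2'⟩ := digit_tail_bound hn ω' k
  have hPeq : ∑ l ∈ Finset.range k, (ω l : ℝ) * (((n:ℝ)+1)⁻¹) ^ (l+1)
      = ∑ l ∈ Finset.range k, (ω' l : ℝ) * (((n:ℝ)+1)⁻¹) ^ (l+1) :=
    Finset.sum_congr rfl fun l hl => by rw [hag l (Finset.mem_range.1 hl)]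
  rw [abs_le]
  constructor <;> linarith

section Construction

variable {F : Set ℝ} {γ : ℝ} {n : ℕ}

set_option maxHeartbeats 1000000 in
theorem dimH_iterSumset_lower (hFc : IsClosed F) (hγ0 : 0 < γ) (hγ2 : γ ≤ 2⁻¹)
    (hD : 0 < Metric.diam F)
    (two : ∀ x ∈ F, ∀ R, 0 < R → R < Metric.diam F →
      ∃ p q, p ∈ F ∧ q ∈ F ∧ dist p x < R ∧ dist q x < R ∧ γ * R ≤ q - p)
    (hn : 1 ≤ n) :
    ENNReal.ofReal (Real.log (n+1) / Real.log (200 * n / γ)) ≤ dimH (iterSumset F n) := by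
  classical
  set D := Metric.diam F with hDdef
  -- F is nonempty
  obtain ⟨x0, hx0⟩ : F.Nonempty := by
    rcases F.eq_empty_or_nonempty with h | h
    · exfalso; rw [hDdef, h, Metric.diam_empty] at hD; exact lt_irrefl _ hD
    · exact h
  have two' : ∀ x R : ℝ, x ∈ F → 0 < R → R < D →
      ∃ p q, p ∈ F ∧ q ∈ F ∧ dist p x < R ∧ dist q x < R ∧ γ * R ≤ q - p :=
    fun x R hx hR hRD => two x hx R hR hRD
  choose! pt qt hpF hqF hpd hqd hgap using two'
  -- geometric scales
  set q0 : ℝ := γ / (200 * n) with hq0def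
  have hn0 : (0:ℝ) < n := by exact_mod_cast hn
  have hq0 : 0 < q0 := by positivity
  have hn1 : (1:ℝ) ≤ n := by exact_mod_cast hn
  have hq0half : q0 ≤ 1/400 := by
    rw [hq0def, div_le_div_iff₀ (by positivity) (by norm_num)]
    nlinarith
  set R : ℕ → ℝ := fun k => (D/2) * q0 ^ k with hRdef
  have hRpos : ∀ k, 0 < R k := fun k => by positivity
  have hRltD : ∀ k, R k < D := by
    intro k
    have h1 : q0 ^ k ≤ 1 := pow_le_one₀ hq0.le (by linarith)
    have : (D/2) * q0 ^ k ≤ D/2 * 1 := by nlinarith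
    simp only [hRdef]; nlinarith
  have hRsucc : ∀ k, R (k+1) = q0 * R k := by
    intro k; simp only [hRdef]; ring
  -- the tree of vectors
  set V : List (Fin (n+1)) → Fin n → ℝ := vecAux x0 pt qt R n with hVdef
  have hVF : ∀ w i, V w i ∈ F := by
    intro w
    induction w with
    | nil => intro i; exact hx0
    | cons j w ih =>
      intro i
      simp only [hVdef, vecAux]
      split_ifs
      · exact hqF _ _ (ih i) (hRpos _) (hRltD _)
      · exact hpF _ _ (ih i) (hRpos _) (hRltD _)
  have hVmove : ∀ w (j : Fin (n+1)) i, |V (j :: w) i - V w i| < R w.length := by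
    intro w j i
    simp only [hVdef, vecAux]
    split_ifs
    · have := hqd _ _ (hVF w i) (hRpos w.length) (hRltD w.length)
      rwa [Real.dist_eq] at this
    · have := hpd _ _ (hVF w i) (hRpos w.length) (hRltD w.length)
      rwa [Real.dist_eq] at this
  set Sm : List (Fin (n+1)) → ℝ := fun w => ∑ i, V w i with hSmdef
  have hgapS : ∀ (w : List (Fin (n+1))) (j j' : Fin (n+1)), (j:ℕ) < (j':ℕ) →
      γ * R w.length ≤ Sm (j' :: w) - Sm (j :: w) := by
    intro w j j' hjj
    have hjn : (j:ℕ) < n := by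
      have := j'.isLt; omega
    rw [hSmdef]
    simp only
    rw [← Finset.sum_sub_distrib]
    have hterm : ∀ i : Fin n, 0 ≤ V (j' :: w) i - V (j :: w) i := by
      intro i
      simp only [hVdef, vecAux]
      split_ifs with h1 h2 h2
      · simp
      · have h3 : 0 ≤ γ * R w.length := by positivity
        linarith [hgap _ _ (hVF w i) (hRpos w.length) (hRltD w.length)]
      · omega
      · simp
    have hi0 : γ * R w.length ≤ V (j' :: w) ⟨(j:ℕ), hjn⟩ - V (j :: w) ⟨(j:ℕ), hjn⟩ := by
      simp only [hVdef, vecAux]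
      rw [if_pos (by simpa using hjj), if_neg (by simp)]
      exact hgap _ _ (hVF w _) (hRpos w.length) (hRltD w.length)
    calc γ * R w.length ≤ V (j' :: w) ⟨(j:ℕ), hjn⟩ - V (j :: w) ⟨(j:ℕ), hjn⟩ := hi0
      _ ≤ ∑ i, (V (j' :: w) i - V (j :: w) i) :=
          Finset.single_le_sum (fun i _ => hterm i) (Finset.mem_univ _)
  have hwsucc : ∀ (ω : ℕ → Fin (n+1)) (k : ℕ), wpre ω (k+1) = ω k :: wpre ω k :=
    fun ω k => rfl
  have hq01 : q0 < 1 := by linarith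
  have hstep : ∀ (ω : ℕ → Fin (n+1)) (i : Fin n) (k : ℕ),
      dist (V (wpre ω k) i) (V (wpre ω (k+1)) i) ≤ (D/2) * q0 ^ k := by
    intro ω i k
    have h := hVmove (wpre ω k) (ω k) i
    rw [wpre_length ω k] at h
    rw [hwsucc, Real.dist_eq, abs_sub_comm]
    exact h.le
  have hlim : ∀ (ω : ℕ → Fin (n+1)) (i : Fin n), ∃ L,
      Tendsto (fun k => V (wpre ω k) i) atTop (𝓝 L) := by
    intro ω i
    exact cauchySeq_tendsto_of_complete
      (cauchySeq_of_le_geometric q0 (D/2) hq01 (hstep ω i))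
  choose xi hxi using hlim
  have htail : ∀ ω (i : Fin n) k, dist (V (wpre ω k) i) (xi ω i) ≤ 2 * R k := by
    intro ω i k
    have h := dist_le_of_le_geometric_of_tendsto q0 (D/2) hq01 (hstep ω i) (hxi ω i) k
    have h2 : (0:ℝ) < 1 - q0 := by linarith
    rw [le_div_iff₀ h2] at h
    have hRk : R k = D/2 * q0 ^ k := by simp only [hRdef]
    nlinarith [hRpos k, dist_nonneg (x := V (wpre ω k) i) (y := xi ω i)]
  have hxiF : ∀ ω (i : Fin n), xi ω i ∈ F := fun ω i =>
    hFc.mem_of_tendsto (hxi ω i) (Filter.Eventually.of_forall fun k => hVF _ _)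
  set Φ : (ℕ → Fin (n+1)) → ℝ := fun ω => ∑ i, xi ω i with hΦdef
  have hΦmem : ∀ ω, Φ ω ∈ iterSumset F n := fun ω => sum_mem_iterSumset _ (fun i => hxiF ω i)
  have hΦtail : ∀ ω k, |Φ ω - Sm (wpre ω k)| ≤ n * (2 * R k) := by
    intro ω k
    have heq : Φ ω - Sm (wpre ω k) = ∑ i, (xi ω i - V (wpre ω k) i) := by
      simp [hΦdef, hSmdef, Finset.sum_sub_distrib]
    rw [heq]
    calc |∑ i, (xi ω i - V (wpre ω k) i)| ≤ ∑ i, |xi ω i - V (wpre ω k) i| :=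
          Finset.abs_sum_le_sum_abs _ _
      _ ≤ ∑ _i : Fin n, 2 * R k := Finset.sum_le_sum (fun i _ => by
            rw [abs_sub_comm, ← Real.dist_eq]; exact htail ω i k)
      _ = n * (2 * R k) := by
            rw [Finset.sum_const, Finset.card_univ, Fintype.card_fin, nsmul_eq_mul]
  have hsep : ∀ (ω ω' : ℕ → Fin (n+1)) (k : ℕ), (∀ l, l < k → ω l = ω' l) →
      ((ω k : ℕ) < (ω' k : ℕ)) → γ/2 * R k ≤ Φ ω' - Φ ω := by
    intro ω ω' k hag hlt
    have hw : wpre ω k = wpre ω' k := wpre_agree hag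
    have hgapk := hgapS (wpre ω k) (ω k) (ω' k) hlt
    rw [wpre_length] at hgapk
    have e1 := hΦtail ω (k+1)
    have e2 := hΦtail ω' (k+1)
    rw [hwsucc] at e1 e2
    rw [← hw] at e2
    have hnR : (n:ℝ) * (2 * R (k+1)) = γ * R k / 100 := by
      rw [hRsucc, hq0def]; field_simp; ring
    rw [abs_le] at e1 e2
    have h0 : 0 ≤ γ * R k := by positivity
    linarith [e1.1, e1.2, e2.1, e2.2]
  have hsep' : ∀ (ω ω' : ℕ → Fin (n+1)) (k : ℕ), (∀ l, l < k → ω l = ω' l) →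
      ω k ≠ ω' k → γ/2 * R k ≤ |Φ ω - Φ ω'| := by
    intro ω ω' k hag hne
    rcases lt_trichotomy ((ω k : ℕ)) ((ω' k : ℕ)) with h | h | h
    · have := hsep ω ω' k hag h
      rw [abs_sub_comm]
      exact this.trans (le_abs_self _)
    · exact absurd (Fin.ext h) hne
    · have := hsep ω' ω k (fun l hl => (hag l hl).symm) h
      exact this.trans (le_abs_self _)
  -- injectivity of the limit map
  have hΦinj : Function.Injective Φ := by
    intro ω ω' h
    by_contra hne
    have hex : ∃ l, ω l ≠ ω' l := by
      by_contra hall; push_neg at hall; exact hne (funext hall)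
    set k := Nat.find hex with hk
    have hdk : ω k ≠ ω' k := Nat.find_spec hex
    have hag : ∀ l, l < k → ω l = ω' l := fun l hl =>
      not_not.1 (Nat.find_min hex hl)
    have hs := hsep' ω ω' k hag hdk
    rw [h, sub_self, abs_zero] at hs
    have : 0 < γ/2 * R k := by positivity
    linarith
  set f : ℝ → ℝ := fun x => digitMap n (Function.invFun Φ x) with hfdef
  have hfl : ∀ ω, f (Φ ω) = digitMap n ω := fun ω => by
    simp only [hfdef]
    rw [Function.leftInverse_invFun hΦinj ω]
  -- exponent
  set Λ : ℝ := 200 * n / γ with hΛdef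
  have hΛq : q0 = Λ⁻¹ := by rw [hΛdef, hq0def]; field_simp
  have hΛ1 : 1 < Λ := by
    rw [hΛdef, lt_div_iff₀ hγ0]
    nlinarith
  set α : ℝ := Real.log ((n:ℝ)+1) / Real.log Λ with hαdef
  have hlogΛ : 0 < Real.log Λ := Real.log_pos hΛ1
  have hlogn : 0 < Real.log ((n:ℝ)+1) := Real.log_pos (by linarith)
  have hα0 : 0 < α := div_pos hlogn hlogΛ
  set b : ℝ := ((n:ℝ)+1)⁻¹ with hbdef
  have hb0 : 0 < b := by positivity
  have hqα : ∀ k : ℕ, ((q0 ^ k : ℝ)) ^ α = b ^ k := by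
    intro k
    have hαΛ : α * Real.log Λ = Real.log ((n:ℝ)+1) := by
      rw [hαdef]; field_simp
    have hlq : Real.log q0 = -Real.log Λ := by rw [hΛq, Real.log_inv]
    have hlb : Real.log b = -Real.log ((n:ℝ)+1) := by rw [hbdef, Real.log_inv]
    have h1 : ((q0 ^ k : ℝ)) ^ α = Real.exp (α * ((k:ℕ) * Real.log q0)) := by
      rw [Real.rpow_def_of_pos (pow_pos hq0 k), Real.log_pow]
      ring_nf
    have h2 : Real.exp ((k:ℕ) * Real.log b) = b ^ k := by
      rw [mul_comm, ← Real.rpow_def_of_pos hb0, Real.rpow_natCast]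
    rw [h1, ← h2]
    congr 1
    rw [hlq, hlb]
    linear_combination (-(k:ℝ)) * hαΛ
  set c0 : ℝ := γ/2 * (D/2) with hc0def
  have hc00 : 0 < c0 := by positivity
  set K' : ℝ := c0 ^ (-α) with hK'def
  have hK'0 : 0 < K' := Real.rpow_pos_of_pos hc00 _
  -- the Hölder estimate
  have hHold : HolderOnWith K'.toNNReal α.toNNReal f (Set.range Φ) := by
    intro u hu v hv
    obtain ⟨ω, rfl⟩ := hu
    obtain ⟨ω', rfl⟩ := hv
    by_cases heq : Φ ω = Φ ω'
    · rw [heq]; simp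
    · have hne : ω ≠ ω' := fun h => heq (by rw [h])
      have hex : ∃ l, ω l ≠ ω' l := by
        by_contra hall; push_neg at hall; exact hne (funext hall)
      set k := Nat.find hex with hk
      have hdk : ω k ≠ ω' k := Nat.find_spec hex
      have hag : ∀ l, l < k → ω l = ω' l := fun l hl =>
        not_not.1 (Nat.find_min hex hl)
      have hdist : c0 * q0 ^ k ≤ dist (Φ ω) (Φ ω') := by
        have := hsep' ω ω' k hag hdk
        rw [Real.dist_eq]
        calc c0 * q0 ^ k = γ/2 * R k := by rw [hc0def]; simp only [hRdef]; ring
          _ ≤ |Φ ω - Φ ω'| := this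
      have hdist0 : 0 < dist (Φ ω) (Φ ω') :=
        lt_of_lt_of_le (by positivity) hdist
      have hreal : dist (f (Φ ω)) (f (Φ ω')) ≤ K' * dist (Φ ω) (Φ ω') ^ α := by
        rw [hfl, hfl, Real.dist_eq]
        have hΨ : |digitMap n ω - digitMap n ω'| ≤ b ^ k := digit_close hn ω ω' k hag
        have hmono : (c0 * q0 ^ k) ^ α ≤ dist (Φ ω) (Φ ω') ^ α :=
          Real.rpow_le_rpow (by positivity) hdist hα0.le
        have hval : (c0 * q0 ^ k) ^ α = c0 ^ α * b ^ k := by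
          rw [Real.mul_rpow hc00.le (by positivity), hqα]
        have hKc : K' * c0 ^ α = 1 := by
          rw [hK'def, ← Real.rpow_add hc00]
          simp
        calc |digitMap n ω - digitMap n ω'| ≤ b ^ k := hΨ
          _ = K' * (c0 ^ α * b ^ k) := by rw [← mul_assoc, hKc, one_mul]
          _ = K' * (c0 * q0 ^ k) ^ α := by rw [hval]
          _ ≤ K' * dist (Φ ω) (Φ ω') ^ α := by
              exact mul_le_mul_of_nonneg_left hmono hK'0.le
      calc edist (f (Φ ω)) (f (Φ ω')) = ENNReal.ofReal (dist (f (Φ ω)) (f (Φ ω'))) :=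
            edist_dist _ _
        _ ≤ ENNReal.ofReal (K' * dist (Φ ω) (Φ ω') ^ α) := ENNReal.ofReal_le_ofReal hreal
        _ = ENNReal.ofReal K' * ENNReal.ofReal (dist (Φ ω) (Φ ω') ^ α) :=
            ENNReal.ofReal_mul hK'0.le
        _ = ENNReal.ofReal K' * ENNReal.ofReal (dist (Φ ω) (Φ ω')) ^ α := by
            rw [ENNReal.ofReal_rpow_of_pos hdist0]
        _ = (K'.toNNReal : ℝ≥0∞) * edist (Φ ω) (Φ ω') ^ ((α.toNNReal : ℝ)) := by
            rw [edist_dist, Real.coe_toNNReal _ hα0.le]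
            rfl
  -- the image covers [0,1]
  have hsurj : Set.Icc (0:ℝ) 1 ⊆ f '' (Set.range Φ) := by
    intro c hc
    obtain ⟨ω, hω⟩ := digit_surj hn hc
    exact ⟨Φ ω, Set.mem_range_self ω, by rw [hfl]; exact hω⟩
  have hIcc : dimH (Set.Icc (0:ℝ) 1) = 1 := by
    rw [Real.dimH_of_nonempty_interior (by rw [interior_Icc]; exact ⟨1/2, by norm_num⟩)]
    simp
  have h1le : (1:ℝ≥0∞) ≤ dimH (f '' Set.range Φ) := hIcc ▸ dimH_mono hsurj
  have hrpos : 0 < α.toNNReal := Real.toNNReal_pos.2 hα0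
  have h2le : (1:ℝ≥0∞) ≤ dimH (Set.range Φ) / (α.toNNReal : ℝ≥0∞) :=
    h1le.trans (hHold.dimH_image_le hrpos)
  have h3le : (α.toNNReal : ℝ≥0∞) ≤ dimH (Set.range Φ) := by
    rw [ENNReal.le_div_iff_mul_le
      (Or.inl (by exact_mod_cast hrpos.ne')) (Or.inl ENNReal.coe_ne_top), one_mul] at h2le
    exact h2le
  have h4le : dimH (Set.range Φ) ≤ dimH (iterSumset F n) :=
    dimH_mono (Set.range_subset_iff.2 hΦmem)
  have hcoe : ENNReal.ofReal α = (α.toNNReal : ℝ≥0∞) := rfl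
  rw [hcoe]
  exact h3le.trans h4le

end Construction

theorem stmt15aux (F : Set ℝ) (hFc : IsClosed F) (s : ℝ) (hs : 0 < s)
    (hL : s ≤ lowerDim F) :
    Filter.Tendsto (fun n : ℕ => dimH (iterSumset F n)) Filter.atTop (nhds 1) := by
  obtain ⟨hdiam, t, C, ht, hC, hP⟩ := exists_prop_of_le_lowerDim hs hL
  obtain ⟨γ, hγ0, hγ2, two⟩ := twoPoint ht hC hP
  have hlow : ∀ n : ℕ, 1 ≤ n →
      ENNReal.ofReal (Real.log ((n:ℝ)+1) / Real.log (200*n/γ)) ≤ dimH (iterSumset F n) :=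
    fun n hn => dimH_iterSumset_lower hFc hγ0 hγ2 hdiam two hn
  have hup : ∀ n : ℕ, dimH (iterSumset F n) ≤ 1 := by
    intro n
    calc dimH (iterSumset F n) ≤ dimH (Set.univ : Set ℝ) := dimH_mono (Set.subset_univ _)
      _ = 1 := Real.dimH_univ
  set c : ℝ := Real.log (200/γ) with hcdef
  set L : ℕ → ℝ := fun n => Real.log ((n:ℝ)+1) / (c + Real.log ((n:ℝ)+1)) with hLdef
  have hL1 : Tendsto L atTop (𝓝 1) := by
    have hu : Tendsto (fun n : ℕ => Real.log ((n:ℝ)+1)) atTop atTop :=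
      Real.tendsto_log_atTop.comp
        (tendsto_atTop_add_const_right atTop 1 tendsto_natCast_atTop_atTop)
    have hfrac : Tendsto (fun u : ℝ => u/(c+u)) atTop (𝓝 1) := by
      have h0 : Tendsto (fun u : ℝ => c/(c+u)) atTop (𝓝 0) :=
        Tendsto.div_atTop tendsto_const_nhds (tendsto_atTop_add_const_left atTop c tendsto_id)
      have h1 : Tendsto (fun u : ℝ => 1 - c/(c+u)) atTop (𝓝 (1-0)) := tendsto_const_nhds.sub h0
      rw [sub_zero] at h1
      apply h1.congr'
      filter_upwards [eventually_gt_atTop (|c|+1)] with u hu2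
      have hne : c + u ≠ 0 := by nlinarith [neg_abs_le c, le_abs_self c]
      field_simp
      ring
    exact hfrac.comp hu
  have hlow' : ∀ᶠ n in atTop, ENNReal.ofReal (L n) ≤ dimH (iterSumset F n) := by
    filter_upwards [eventually_ge_atTop 1] with n hn
    have hn1 : (1:ℝ) ≤ (n:ℝ) := by exact_mod_cast hn
    have hc : Real.log (200*(n:ℝ)/γ) = c + Real.log n := by
      rw [hcdef, show (200*(n:ℝ)/γ) = (200/γ)*(n:ℝ) by ring,
        Real.log_mul (by positivity) (by positivity)]
    have hnum : 0 ≤ Real.log ((n:ℝ)+1) := Real.log_nonneg (by linarith)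
    have hden : 0 < c + Real.log (n:ℝ) := by
      rw [← hc]
      apply Real.log_pos
      rw [lt_div_iff₀ hγ0]
      nlinarith
    have hmono : Real.log (n:ℝ) ≤ Real.log ((n:ℝ)+1) :=
      Real.log_le_log (by linarith) (by linarith)
    have hLα : L n ≤ Real.log ((n:ℝ)+1) / Real.log (200*n/γ) := by
      rw [hc]
      show Real.log ((n:ℝ)+1) / (c + Real.log ((n:ℝ)+1)) ≤ Real.log ((n:ℝ)+1) / (c + Real.log n)
      exact div_le_div_of_nonneg_left hnum hden (by linarith)
    exact le_trans (ENNReal.ofReal_le_ofReal hLα) (hlow n hn)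
  have hlimE : Tendsto (fun n => ENNReal.ofReal (L n)) atTop (𝓝 1) := by
    have h := ENNReal.tendsto_ofReal hL1
    rwa [ENNReal.ofReal_one] at h
  exact tendsto_of_tendsto_of_tendsto_of_le_of_le' hlimE tendsto_const_nhds hlow'
    (Filter.Eventually.of_forall hup)


/-- If `F ⊆ ℝ` is closed with lower dimension at least `s > 0`, then the Hausdorff
dimension of the iterated sumsets `nF` tends to `1`. -/
theorem stmt15 (F : Set ℝ) (hFc : IsClosed F) (s : ℝ) (hs : 0 < s)
    (hL : s ≤ lowerDim F) :
    Filter.Tendsto (fun n : ℕ => dimH (iterSumset F n)) Filter.atTop (nhds 1) := by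
  exact stmt15aux F hFc s hs hL
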